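/- arXiv:2501.06905 — 3 statements merged into one kernel-verified Lean document; each statement's English description precedes it below -/
import Mathlib

section
/- For every natural number n ≥ 1 and every p ∈ (0,1), the sum over j from 1 to n of (1 - (1-p)^j)/j is at most log(n e) + log p + 1/((n+1) p). -/
theorem sum_one_sub_pow_div_le (n : ℕ) (hn : 1 ≤ n) (p : ℝ) (hp0 : 0 < p) (hp1 : p < 1) :
    ∑ j ∈ Finset.Icc 1 n, (1 - (1 - p) ^ j) / (j : ℝ)
      ≤ Real.log (n * Real.exp 1) + Real.log p + 1 / ((n + 1 : ℝ) * p) := by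
  set x : ℝ := 1 - p with hxdef
  have hx0 : 0 ≤ x := by simp [hxdef]; linarith
  have hx1 : x < 1 := by simp [hxdef]; linarith
  have habs : |x| < 1 := by rw [abs_of_nonneg hx0]; exact hx1
  have hsum := Real.hasSum_pow_div_log_of_abs_lt_one habs
  have h1x : (1 : ℝ) - x = p := by simp [hxdef]
  rw [h1x] at hsum
  have hsummable := hsum.summable
  have hsplit := Summable.sum_add_tsum_nat_add n hsummable
  rw [hsum.tsum_eq] at hsplit
  -- identify range-sum with Icc-sum
  have hIcc : ∑ i ∈ Finset.range n, x ^ (i + 1) / ((i : ℝ) + 1)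
      = ∑ j ∈ Finset.Icc 1 n, x ^ j / (j : ℝ) := by
    rw [← Finset.Ico_add_one_right_eq_Icc, Finset.sum_Ico_eq_sum_range]
    apply Finset.sum_congr (by simp)
    intro i _
    push_cast
    rw [add_comm 1 i, add_comm (1 : ℝ) (i : ℝ)]
  have hrw : ∑ j ∈ Finset.Icc 1 n, (1 - x ^ j) / (j : ℝ)
      = ∑ j ∈ Finset.Icc 1 n, (1 / (j : ℝ)) - ∑ j ∈ Finset.Icc 1 n, x ^ j / (j : ℝ) := by
    rw [← Finset.sum_sub_distrib]
    exact Finset.sum_congr rfl fun j _ => by rw [sub_div]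
  -- tail bound
  set T := ∑' (i : ℕ), x ^ (i + n + 1) / (((i + n : ℕ) : ℝ) + 1) with hT
  have hts : Summable (fun i : ℕ => x ^ (i + n + 1) / (((i + n : ℕ) : ℝ) + 1)) :=
    (summable_nat_add_iff n).2 hsummable
  have hgs : Summable (fun i : ℕ => x ^ i) := summable_geometric_of_lt_one hx0 hx1
  have hs2 : Summable (fun i : ℕ => x ^ (i + n + 1) / ((n : ℝ) + 1)) := by
    apply (hgs.mul_right (x ^ (n + 1) / ((n : ℝ) + 1))).congr
    intro i
    rw [show i + n + 1 = i + (n + 1) from by ring, pow_add]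
    ring
  have hTle : T ≤ 1 / ((n + 1 : ℝ) * p) := by
    have hle : T ≤ ∑' (i : ℕ), x ^ (i + n + 1) / ((n : ℝ) + 1) := by
      apply Summable.tsum_le_tsum _ hts hs2
      intro i
      apply div_le_div_of_nonneg_left (pow_nonneg hx0 _) (by positivity)
      push_cast
      linarith [Nat.cast_nonneg (α := ℝ) i]
    refine hle.trans ?_
    have heq : ∑' (i : ℕ), x ^ (i + n + 1) / ((n : ℝ) + 1)
        = (∑' (i : ℕ), x ^ i) * (x ^ (n + 1) / ((n : ℝ) + 1)) := by
      rw [← tsum_mul_right]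
      exact tsum_congr fun i => by
        rw [show i + n + 1 = i + (n + 1) from by ring, pow_add]; ring
    rw [heq, tsum_geometric_of_lt_one hx0 hx1, h1x]
    calc p⁻¹ * (x ^ (n + 1) / ((n : ℝ) + 1)) ≤ p⁻¹ * (1 / ((n : ℝ) + 1)) := by
          gcongr
          exact pow_le_one₀ hx0 hx1.le
      _ = 1 / ((n + 1 : ℝ) * p) := by
          rw [one_div, one_div, mul_inv]
          ring
  -- harmonic bound
  have hH : ∑ j ∈ Finset.Icc 1 n, (1 / (j : ℝ)) ≤ 1 + Real.log n := by
    have h := harmonic_le_one_add_log n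
    rw [harmonic_eq_sum_Icc] at h
    calc ∑ j ∈ Finset.Icc 1 n, (1 / (j : ℝ))
        = ((∑ i ∈ Finset.Icc 1 n, (i : ℚ)⁻¹ : ℚ) : ℝ) := by push_cast; simp [one_div]
      _ ≤ 1 + Real.log n := h
  have hlog : Real.log (n * Real.exp 1) = Real.log n + 1 := by
    rw [Real.log_mul (by positivity) (Real.exp_ne_zero 1), Real.log_exp]
  have hrange : ∑ j ∈ Finset.Icc 1 n, x ^ j / (j : ℝ) = -Real.log p - T := by
    rw [← hIcc]
    linarith [hsplit]
  rw [hrw, hrange, hlog]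
  linarith
end

section
/- For natural numbers k0 ≤ k ≤ x ≤ n with k0 ≥ 1, the ratio C(x-1, k-1)/C(n-1, k-1) is at most C(x-1, k0)/C(n-1, k0), which in turn is at most (x/n)^{k0}. -/
private lemma ratio_step (m N j : ℕ) (hj : j < m) (hmN : m ≤ N) :
    (Nat.choose m (j+1) : ℝ) / Nat.choose N (j+1)
      = ((Nat.choose m j : ℝ) / Nat.choose N j) * (((m - j : ℕ) : ℝ) / ((N - j : ℕ) : ℝ)) := by
  have hNj : j < N := lt_of_lt_of_le hj hmN
  have h1 : (Nat.choose m (j+1) : ℝ) * (j+1) = (Nat.choose m j : ℝ) * ((m - j : ℕ) : ℝ) := by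
    exact_mod_cast congrArg (Nat.cast : ℕ → ℝ) (Nat.choose_succ_right_eq m j)
  have h2 : (Nat.choose N (j+1) : ℝ) * (j+1) = (Nat.choose N j : ℝ) * ((N - j : ℕ) : ℝ) := by
    exact_mod_cast congrArg (Nat.cast : ℕ → ℝ) (Nat.choose_succ_right_eq N j)
  have hc1 : (Nat.choose N j : ℝ) ≠ 0 := by
    exact_mod_cast (Nat.choose_pos hNj.le).ne'
  have hc2 : (Nat.choose N (j+1) : ℝ) ≠ 0 := by
    exact_mod_cast (Nat.choose_pos hNj).ne'
  have hNjz : ((N - j : ℕ) : ℝ) ≠ 0 := by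
    have : 0 < N - j := Nat.sub_pos_of_lt hNj
    exact_mod_cast this.ne'
  have hj1 : ((j : ℝ) + 1) ≠ 0 := by positivity
  field_simp
  nlinarith [mul_pos (Nat.choose_pos hNj.le) (Nat.choose_pos hNj)]

private lemma ratio_nonneg (m N j : ℕ) : 0 ≤ (Nat.choose m j : ℝ) / Nat.choose N j := by
  positivity

private lemma ratio_anti (m N : ℕ) (hmN : m ≤ N) (a b : ℕ) (hab : a ≤ b) (hbm : b ≤ m) :
    (Nat.choose m b : ℝ) / Nat.choose N b ≤ (Nat.choose m a : ℝ) / Nat.choose N a := by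
  induction b, hab using Nat.le_induction with
  | base => exact le_rfl
  | succ b hab ih =>
    have hbm' : b < m := hbm
    have step := ratio_step m N b hbm' hmN
    have hfac : ((m - b : ℕ) : ℝ) / ((N - b : ℕ) : ℝ) ≤ 1 := by
      have hNb : (0:ℝ) < ((N - b : ℕ) : ℝ) := by
        have : 0 < N - b := Nat.sub_pos_of_lt (lt_of_lt_of_le hbm' hmN)
        exact_mod_cast this
      rw [div_le_one hNb]
      exact_mod_cast Nat.sub_le_sub_right hmN b
    calc (Nat.choose m (b+1) : ℝ) / Nat.choose N (b+1)
        = ((Nat.choose m b : ℝ) / Nat.choose N b) * (((m - b : ℕ) : ℝ) / ((N - b : ℕ) : ℝ)) := step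
      _ ≤ ((Nat.choose m b : ℝ) / Nat.choose N b) * 1 :=
          mul_le_mul_of_nonneg_left hfac (ratio_nonneg m N b)
      _ = (Nat.choose m b : ℝ) / Nat.choose N b := mul_one _
      _ ≤ _ := ih (le_trans (Nat.le_succ b) hbm)

private lemma ratio_le_pow (m N : ℕ) (hmN : m ≤ N) (j : ℕ) (hjm : j ≤ m) :
    (Nat.choose m j : ℝ) / Nat.choose N j ≤ (((m:ℝ)+1) / ((N:ℝ)+1)) ^ j := by
  induction j with
  | zero => simp
  | succ j ih =>
    have hjm' : j < m := hjm
    have hNj : j < N := lt_of_lt_of_le hjm' hmN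
    have step := ratio_step m N j hjm' hmN
    have hN1 : (0:ℝ) < (N:ℝ) + 1 := by positivity
    have hNjpos : (0:ℝ) < ((N - j : ℕ) : ℝ) := by
      have : 0 < N - j := Nat.sub_pos_of_lt hNj
      exact_mod_cast this
    have hfac : ((m - j : ℕ) : ℝ) / ((N - j : ℕ) : ℝ) ≤ ((m:ℝ)+1) / ((N:ℝ)+1) := by
      rw [div_le_div_iff₀ hNjpos hN1]
      have hmj : ((m - j : ℕ) : ℝ) = (m:ℝ) - j := by
        exact_mod_cast Nat.cast_sub hjm'.le
      have hNjc : ((N - j : ℕ) : ℝ) = (N:ℝ) - j := by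
        exact_mod_cast Nat.cast_sub hNj.le
      rw [hmj, hNjc]
      have hmN' : (m:ℝ) ≤ N := by exact_mod_cast hmN
      have hj0 : (0:ℝ) ≤ j := by positivity
      nlinarith
    calc (Nat.choose m (j+1) : ℝ) / Nat.choose N (j+1)
        = ((Nat.choose m j : ℝ) / Nat.choose N j) * (((m - j : ℕ) : ℝ) / ((N - j : ℕ) : ℝ)) := step
      _ ≤ ((((m:ℝ)+1) / ((N:ℝ)+1)) ^ j) * (((m:ℝ)+1) / ((N:ℝ)+1)) := by
          apply mul_le_mul (ih hjm'.le) hfac (by positivity) (by positivity)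
      _ = (((m:ℝ)+1) / ((N:ℝ)+1)) ^ (j+1) := (pow_succ _ _).symm

theorem choose_ratio_le (k0 k x n : ℕ) (hk0 : 1 ≤ k0) (hk0k : k0 < k) (hkx : k ≤ x) (hxn : x ≤ n) :
    (Nat.choose (x - 1) (k - 1) : ℝ) / Nat.choose (n - 1) (k - 1)
        ≤ (Nat.choose (x - 1) k0 : ℝ) / Nat.choose (n - 1) k0
      ∧ (Nat.choose (x - 1) k0 : ℝ) / Nat.choose (n - 1) k0 ≤ ((x : ℝ) / n) ^ k0 := by
  have hx1 : 1 ≤ x := le_trans (le_trans hk0 hk0k.le) hkx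
  have hn1 : 1 ≤ n := le_trans hx1 hxn
  have hmN : x - 1 ≤ n - 1 := Nat.sub_le_sub_right hxn 1
  have hk0m : k0 ≤ x - 1 := by omega
  constructor
  · exact ratio_anti (x-1) (n-1) hmN k0 (k-1) (by omega) (by omega)
  · have h := ratio_le_pow (x-1) (n-1) hmN k0 hk0m
    have hxcast : ((x-1 : ℕ):ℝ) + 1 = (x:ℝ) := by
      have : ((x-1 : ℕ):ℝ) = (x:ℝ) - 1 := by push_cast [Nat.cast_sub hx1]; ring
      rw [this]; ring
    have hncast : ((n-1 : ℕ):ℝ) + 1 = (n:ℝ) := by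
      have : ((n-1 : ℕ):ℝ) = (n:ℝ) - 1 := by push_cast [Nat.cast_sub hn1]; ring
      rw [this]; ring
    rwa [hxcast, hncast] at h
end

section
/- For 0 < p < 1 and positive integers k ≤ n with k ≥ (1+ε)(n-1)p + 1 where 0 < ε ≤ 1, the integral ∫_0^p η^{k-1} (1-η)^{n-k} dη is at most (1-p)/((n-1)ε) * p^{k-1} (1-p)^{n-k}. -/
open Real intervalIntegral MeasureTheory

set_option maxHeartbeats 1000000 in
theorem integral_tail_bound (p ε : ℝ) (hp0 : 0 < p) (hp1 : p < 1) (hε0 : 0 < ε) (hε1 : ε ≤ 1)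
    (n k : ℕ) (hn : 2 ≤ n) (hkn : k ≤ n) (hk : (1 + ε) * ((n : ℝ) - 1) * p + 1 ≤ k) :
    ∫ η in (0:ℝ)..p, η ^ (k - 1) * (1 - η) ^ (n - k)
      ≤ (1 - p) / (((n : ℝ) - 1) * ε) * p ^ (k - 1) * (1 - p) ^ (n - k) := by
  have hn1 : (1:ℝ) ≤ (n:ℝ) - 1 := by
    have : (2:ℝ) ≤ n := by exact_mod_cast hn
    linarith
  have h1p : 0 < 1 - p := by linarith
  have hkR : (1:ℝ) < k := by nlinarith [mul_pos (mul_pos (by linarith : (0:ℝ) < 1+ε)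
    (by linarith : (0:ℝ) < (n:ℝ)-1)) hp0]
  have hk2 : 1 < k := by exact_mod_cast hkR
  have hk1 : 1 ≤ k := hk2.le
  have hknR : (k:ℝ) ≤ n := by exact_mod_cast hkn
  set m : ℝ := ((k:ℝ) - n*p)/(1-p) - 1 with hm
  set a : ℝ := ((n:ℝ)-k)*p/(1-p) with hadef
  set c : ℝ := (n:ℝ) - k with hcdef
  have hc0 : 0 ≤ c := by rw [hcdef]; linarith
  have hac : a = c * p / (1-p) := by rw [hadef, hcdef]
  have ha : 0 ≤ a := by rw [hadef]; positivity
  have hεnp : ε * ((n:ℝ)-1) * p ≤ (k:ℝ) - n*p - (1-p) := by nlinarith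
  have hm0 : 0 < m := by
    rw [hm, sub_pos, lt_div_iff₀ h1p]
    nlinarith [mul_pos (mul_pos hε0 (by linarith : (0:ℝ) < (n:ℝ)-1)) hp0]
  have hma : m + a = (k:ℝ) - 1 := by
    rw [hm, hadef]; field_simp; ring
  have hmd : (1-p) * (m+1) = (k:ℝ) - n*p := by rw [hm]; field_simp; ring
  clear_value m a c
  clear hm hadef
  have hcast1 : ((k - 1 : ℕ) : ℝ) = (k:ℝ) - 1 := by
    push_cast [Nat.cast_sub hk1]; ring
  have hcast2 : ((n - k : ℕ) : ℝ) = c := by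
    push_cast [Nat.cast_sub hkn]; rw [hcdef]
  clear hcdef
  set C : ℝ := p ^ (k-1) * (1-p) ^ (n-k) * p ^ (-m) with hC
  have key : ∀ η ∈ Set.Icc (0:ℝ) p, η ^ (k-1) * (1-η) ^ (n-k) ≤ C * η ^ m := by
    rintro η ⟨hη0, hηp⟩
    rcases eq_or_lt_of_le hη0 with h0 | h0
    · rw [← h0, Real.zero_rpow hm0.ne', mul_zero, zero_pow (by omega : k - 1 ≠ 0), zero_mul]
    · have hη1 : η < 1 := lt_of_le_of_lt hηp hp1
      have h1η : 0 < 1 - η := by linarith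
      have core : η ^ a * (1-η) ^ c ≤ p ^ a * (1-p) ^ c := by
        rw [Real.rpow_def_of_pos h0, Real.rpow_def_of_pos h1η, Real.rpow_def_of_pos hp0,
          Real.rpow_def_of_pos h1p, ← Real.exp_add, ← Real.exp_add, Real.exp_le_exp]
        have l1 : Real.log ((1-η)/(1-p)) ≤ (1-η)/(1-p) - 1 :=
          Real.log_le_sub_one_of_pos (by positivity)
        have l2 : Real.log (η/p) ≤ η/p - 1 :=
          Real.log_le_sub_one_of_pos (by positivity)
        rw [Real.log_div h1η.ne' h1p.ne'] at l1
        rw [Real.log_div h0.ne' hp0.ne'] at l2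
        have h2 : a * (Real.log η - Real.log p) ≤ a * (η/p - 1) :=
          mul_le_mul_of_nonneg_left l2 ha
        have h3 : c * (Real.log (1-η) - Real.log (1-p)) ≤ c * ((1-η)/(1-p) - 1) :=
          mul_le_mul_of_nonneg_left l1 hc0
        have e : a * (η/p - 1) + c * ((1-η)/(1-p) - 1) = 0 := by
          rw [hac]; field_simp; ring
        nlinarith [h2, h3, e]
      have e1 : η ^ (k-1) = η ^ m * η ^ a := by
        rw [← Real.rpow_add h0, hma, ← hcast1, Real.rpow_natCast]
      have e2 : (1-η) ^ (n-k) = (1-η) ^ c := by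
        rw [← hcast2, Real.rpow_natCast]
      have hsum : ((k:ℝ)-1) + (-m) = a := by linarith
      have e3 : C * η ^ m = η ^ m * (p ^ a * (1-p) ^ c) := by
        calc C * η ^ m
            = (p ^ ((k:ℝ)-1) * p ^ (-m)) * (1-p) ^ c * η ^ m := by
              rw [hC, ← Real.rpow_natCast p (k-1), ← Real.rpow_natCast (1-p) (n-k),
                hcast1, hcast2]; ring
          _ = p ^ a * (1-p) ^ c * η ^ m := by rw [← Real.rpow_add hp0, hsum]
          _ = η ^ m * (p ^ a * (1-p) ^ c) := by ring
      rw [e1, e2, e3, mul_assoc]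
      exact mul_le_mul_of_nonneg_left core (Real.rpow_nonneg hη0 m)
  have hint1 : IntervalIntegrable (fun η => η ^ (k-1) * (1-η) ^ (n-k)) volume 0 p := by
    apply Continuous.intervalIntegrable; fun_prop
  have hint2 : IntervalIntegrable (fun η => C * η ^ m) volume 0 p :=
    (intervalIntegral.intervalIntegrable_rpow' (by linarith : (-1:ℝ) < m)).const_mul C
  have hm1 : 0 < m + 1 := by linarith
  have hpow : 0 ≤ p ^ (k-1) * (1-p) ^ (n-k) := by positivity
  have hD : p / (m+1) ≤ (1-p) / (((n:ℝ)-1) * ε) := by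
    rw [div_le_div_iff₀ hm1 (by positivity)]
    nlinarith
  calc ∫ η in (0:ℝ)..p, η ^ (k-1) * (1-η) ^ (n-k)
      ≤ ∫ η in (0:ℝ)..p, C * η ^ m :=
        intervalIntegral.integral_mono_on hp0.le hint1 hint2 key
    _ = C * ∫ η in (0:ℝ)..p, η ^ m := intervalIntegral.integral_const_mul C _
    _ = C * (p ^ (m+1) / (m+1)) := by
        rw [integral_rpow (Or.inl (by linarith : (-1:ℝ) < m))]
        rw [Real.zero_rpow (by linarith : m + 1 ≠ 0), sub_zero]
    _ = p ^ (k-1) * (1-p) ^ (n-k) * (p / (m+1)) := by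
        rw [hC]
        have : p ^ (-m) * p ^ (m+1) = p := by
          rw [← Real.rpow_add hp0]; norm_num
        field_simp
        nlinarith [this]
    _ ≤ p ^ (k-1) * (1-p) ^ (n-k) * ((1-p) / (((n:ℝ)-1) * ε)) :=
        mul_le_mul_of_nonneg_left hD hpow
    _ = (1 - p) / (((n : ℝ) - 1) * ε) * p ^ (k - 1) * (1 - p) ^ (n - k) := by ring
end
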